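/- arXiv:math-ph/0604007 — 3 statements merged into one kernel-verified Lean document; each statement's English description precedes it below -/
import Mathlib

section
/- Let q be a complex number with |q| < 1. Then the third order mock theta function \omega(q) satisfies \sum_{n=0}^{\infty} \frac{q^{2n(n+1)}}{[(q;q^2)_{n+1}]^2} = \sum_{n=0}^{\infty} \frac{q^n}{(q;q^2)_{n+1}}. -/
open scoped BigOperators

open Finset Filter

/-- The finite q-Pochhammer symbol `(a; q)_n = ∏_{k=0}^{n-1} (1 - a q^k)`. -/
noncomputable def qPoch (a q : ℂ) (n : ℕ) : ℂ :=
  ∏ k ∈ Finset.range n, (1 - a * q ^ k)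

/- Auxiliary development: the Rogers–Fine style iteration proving
   `∑ qⁿ/(q;q²)_{n+1} = ∑ q^{2n(n+1)}/(q;q²)²_{n+1}`. -/

noncomputable def Pb (q : ℂ) (k n : ℕ) : ℂ :=
  ∏ j ∈ Finset.range n, (1 - q ^ (2*k+3+2*j))

noncomputable def Pt (q : ℂ) (k n : ℕ) : ℂ :=
  ∏ j ∈ Finset.range n, (1 - q ^ (2*k+1+2*j))

noncomputable def C0 (q : ℂ) : ℝ := Real.exp (-(‖q‖/(1-‖q‖)^2))

noncomputable def sTerm (q : ℂ) (k n : ℕ) : ℂ := q ^ ((2*k+1)*n) / Pb q k n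

noncomputable def tTerm (q : ℂ) (k n : ℕ) : ℂ :=
  q ^ ((4*k+2)*n + 2*n*n) / (Pb q k n * Pt q k (n+1))

noncomputable def Sf (q : ℂ) (k : ℕ) : ℂ := ∑' n, sTerm q k n
noncomputable def Tf (q : ℂ) (k : ℕ) : ℂ := ∑' n, tTerm q k n

noncomputable def M (q : ℂ) : ℝ := 2 * (((C0 q)^2)⁻¹ * (1-‖q‖)⁻¹)

lemma one_sub_ne {q : ℂ} (hq : ‖q‖ < 1) {m : ℕ} (hm : 1 ≤ m) : (1:ℂ) - q^m ≠ 0 := by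
  intro h
  have hqm : q ^ m = 1 := by linear_combination -h
  have : ‖q ^ m‖ < 1 := by
    rw [norm_pow]
    calc ‖q‖ ^ m ≤ ‖q‖ ^ 1 := pow_le_pow_of_le_one (norm_nonneg q) hq.le hm
    _ < 1 := by simpa using hq
  rw [hqm] at this; simp at this

lemma norm_one_sub_ge (q : ℂ) (m : ℕ) : 1 - ‖q‖^m ≤ ‖1 - q^m‖ := by
  calc 1 - ‖q‖^m = ‖(1:ℂ)‖ - ‖q^m‖ := by simp
  _ ≤ ‖1 - q^m‖ := norm_sub_norm_le _ _

lemma Pb_ne (q : ℂ) (hq : ‖q‖ < 1) (k n : ℕ) : Pb q k n ≠ 0 :=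
  Finset.prod_ne_zero_iff.2 fun j _ => one_sub_ne hq (by omega)

lemma Pt_ne (q : ℂ) (hq : ‖q‖ < 1) (k n : ℕ) : Pt q k n ≠ 0 :=
  Finset.prod_ne_zero_iff.2 fun j _ => one_sub_ne hq (by omega)

lemma exp_le_one_sub {r : ℝ} (h0 : 0 ≤ r) (h1 : r < 1) {m : ℕ} (hm : 1 ≤ m) :
    Real.exp (-(r^m/(1-r))) ≤ 1 - r^m := by
  have hx1 : r ^ m < 1 := pow_lt_one₀ h0 h1 (by omega)
  have hx0 : 0 ≤ r ^ m := pow_nonneg h0 m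
  have hxr : r ^ m ≤ r := pow_le_of_le_one h0 h1.le (by omega)
  have h1r : 0 < 1 - r := by linarith
  have h1x : 0 < 1 - r ^ m := by linarith
  have key : (1 - r^m)⁻¹ ≤ Real.exp (r^m/(1-r)) := by
    calc (1 - r^m)⁻¹ = 1 + r^m/(1-r^m) := by field_simp; ring
    _ ≤ 1 + r^m/(1-r) := by
        have : r^m/(1-r^m) ≤ r^m/(1-r) := by
          apply div_le_div_of_nonneg_left hx0 h1r; linarith
        linarith
    _ ≤ Real.exp (r^m/(1-r)) := by
        have := Real.add_one_le_exp (r^m/(1-r)); linarith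
  rw [Real.exp_neg]
  calc (Real.exp (r^m/(1-r)))⁻¹ ≤ ((1-r^m)⁻¹)⁻¹ := by
        apply inv_anti₀ (by positivity) key
  _ = 1 - r^m := inv_inv _

lemma geomb {r : ℝ} (h0 : 0 ≤ r) (h1 : r < 1) (n : ℕ) : (r ^ n - 1) / (r - 1) ≤ (1 - r)⁻¹ := by
  have h1r : (0:ℝ) < 1 - r := by linarith
  have h2 : r ^ n ≤ 1 := pow_le_one₀ h0 h1.le
  have e : (r^n-1)/(r-1) = (1-r^n)/(1-r) := by
    rw [← neg_div_neg_eq]; ring_nf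
  rw [e, ← one_div]
  gcongr
  linarith [pow_nonneg h0 n]

lemma real_prod_lb {r : ℝ} (h0 : 0 ≤ r) (h1 : r < 1) (a b n : ℕ) (ha : 1 ≤ a) (hb : 1 ≤ b) :
    Real.exp (-(r/(1-r)^2)) ≤ ∏ j ∈ range n, (1 - r^(a+b*j)) := by
  have h1r : 0 < 1 - r := by linarith
  have hsum : ∑ j ∈ range n, r^(a+b*j) ≤ r/(1-r) := by
    calc ∑ j ∈ range n, r^(a+b*j) ≤ ∑ j ∈ range n, r^(1+j) := by
          apply Finset.sum_le_sum
          intro j _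
          exact pow_le_pow_of_le_one h0 h1.le (by nlinarith)
    _ = r * ∑ j ∈ range n, r^j := by
          rw [Finset.mul_sum]; exact Finset.sum_congr rfl fun j _ => by ring
    _ ≤ r * (1-r)⁻¹ := by
          apply mul_le_mul_of_nonneg_left _ h0
          rw [geom_sum_eq (by intro h; rw [h] at h1; linarith) n]
          exact geomb h0 h1 n
    _ = r/(1-r) := by rw [div_eq_mul_inv]
  calc Real.exp (-(r/(1-r)^2))
      ≤ Real.exp (-((∑ j ∈ range n, r^(a+b*j))/(1-r))) := by
        apply Real.exp_le_exp.2
        rw [neg_le_neg_iff]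
        calc (∑ j ∈ range n, r^(a+b*j))/(1-r) ≤ (r/(1-r))/(1-r) := by
              gcongr
        _ = r/(1-r)^2 := by rw [div_div, sq]
  _ = ∏ j ∈ range n, Real.exp (-(r^(a+b*j)/(1-r))) := by
        rw [← Real.exp_sum]
        congr 1
        rw [Finset.sum_div] at *
        simp [neg_div, Finset.sum_div]
  _ ≤ ∏ j ∈ range n, (1 - r^(a+b*j)) := by
        apply Finset.prod_le_prod
        · intro j _; positivity
        · intro j _; exact exp_le_one_sub h0 h1 (by omega)

lemma C0_pos (q : ℂ) : 0 < C0 q := Real.exp_pos _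

lemma C0_le_one (q : ℂ) (hq : ‖q‖ < 1) : C0 q ≤ 1 := by
  rw [C0, Real.exp_le_one_iff]
  have h1 : (0:ℝ) < 1 - ‖q‖ := by linarith
  have := norm_nonneg q
  rw [neg_nonpos]
  positivity

lemma norm_prod_lb (q : ℂ) (hq : ‖q‖ < 1) (a b n : ℕ) (ha : 1 ≤ a) (hb : 1 ≤ b) :
    C0 q ≤ ∏ j ∈ range n, ‖1 - q^(a+b*j)‖ := by
  have h0 := norm_nonneg q
  calc C0 q ≤ ∏ j ∈ range n, (1 - ‖q‖^(a+b*j)) := real_prod_lb h0 hq a b n ha hb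
  _ ≤ ∏ j ∈ range n, ‖1 - q^(a+b*j)‖ := by
      apply Finset.prod_le_prod
      · intro j _
        have : ‖q‖^(a+b*j) < 1 := pow_lt_one₀ h0 hq (by omega)
        linarith
      · intro j _; exact norm_one_sub_ge q _

lemma norm_Pb (q : ℂ) (hq : ‖q‖ < 1) (k n : ℕ) : C0 q ≤ ‖Pb q k n‖ := by
  rw [Pb, norm_prod]
  exact norm_prod_lb q hq (2*k+3) 2 n (by omega) (by omega)

lemma norm_Pt (q : ℂ) (hq : ‖q‖ < 1) (k n : ℕ) : C0 q ≤ ‖Pt q k n‖ := by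
  rw [Pt, norm_prod]
  exact norm_prod_lb q hq (2*k+1) 2 n (by omega) (by omega)

lemma sTerm_bound (q : ℂ) (hq : ‖q‖ < 1) (k n : ℕ) :
    ‖sTerm q k n‖ ≤ ((C0 q)^2)⁻¹ * ‖q‖^n := by
  have h0 := norm_nonneg q
  have hc := C0_pos q
  have hc1 := C0_le_one q hq
  have hb := norm_Pb q hq k n
  rw [sTerm, norm_div, norm_pow]
  rw [div_le_iff₀ (lt_of_lt_of_le hc hb)]
  calc ‖q‖^((2*k+1)*n) ≤ ‖q‖^n := pow_le_pow_of_le_one h0 hq.le (by nlinarith)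
  _ = ((C0 q)^2)⁻¹ * ‖q‖^n * (C0 q)^2 := by field_simp
  _ ≤ ((C0 q)^2)⁻¹ * ‖q‖^n * ‖Pb q k n‖ := by
      apply mul_le_mul_of_nonneg_left _
        (mul_nonneg (inv_nonneg.2 (by positivity)) (pow_nonneg h0 n))
      nlinarith

lemma tTerm_bound (q : ℂ) (hq : ‖q‖ < 1) (k n : ℕ) :
    ‖tTerm q k n‖ ≤ ((C0 q)^2)⁻¹ * ‖q‖^n := by
  have h0 := norm_nonneg q
  have hb := norm_Pb q hq k n
  have ht := norm_Pt q hq k (n+1)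
  have hc := C0_pos q
  rw [tTerm, norm_div, norm_pow, norm_mul]
  rw [div_le_iff₀ (by nlinarith)]
  calc ‖q‖^((4*k+2)*n + 2*n*n) ≤ ‖q‖^n := pow_le_pow_of_le_one h0 hq.le (by nlinarith)
  _ = ((C0 q)^2)⁻¹ * ‖q‖^n * (C0 q * C0 q) := by rw [sq]; field_simp
  _ ≤ ((C0 q)^2)⁻¹ * ‖q‖^n * (‖Pb q k n‖ * ‖Pt q k (n+1)‖) := by
      apply mul_le_mul_of_nonneg_left _
        (mul_nonneg (inv_nonneg.2 (by positivity)) (pow_nonneg h0 n))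
      apply mul_le_mul hb ht hc.le (le_trans hc.le hb)

lemma sSummable (q : ℂ) (hq : ‖q‖ < 1) (k : ℕ) : Summable (sTerm q k) :=
  Summable.of_norm_bounded
    (Summable.mul_left _ (summable_geometric_of_lt_one (norm_nonneg q) hq))
    (sTerm_bound q hq k)

lemma tSummable (q : ℂ) (hq : ‖q‖ < 1) (k : ℕ) : Summable (tTerm q k) :=
  Summable.of_norm_bounded
    (Summable.mul_left _ (summable_geometric_of_lt_one (norm_nonneg q) hq))
    (tTerm_bound q hq k)

lemma tsum_norm_le_geom {q : ℂ} (hq : ‖q‖ < 1) {B : ℝ} (f : ℕ → ℂ)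
    (hf : ∀ n, ‖f n‖ ≤ B * ‖q‖^n) : ‖∑' n, f n‖ ≤ B * (1-‖q‖)⁻¹ := by
  have h0 := norm_nonneg q
  have hgs : Summable (fun n : ℕ => B * ‖q‖^n) :=
    Summable.mul_left _ (summable_geometric_of_lt_one h0 hq)
  calc ‖∑' n, f n‖ ≤ ∑' n : ℕ, B * ‖q‖^n := tsum_of_norm_bounded hgs.hasSum hf
  _ = B * (1-‖q‖)⁻¹ := by rw [tsum_mul_left, tsum_geometric_of_lt_one h0 hq]

lemma M_nonneg (q : ℂ) (hq : ‖q‖ < 1) : 0 ≤ M q := by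
  have hc := C0_pos q
  have h1 : (0:ℝ) < 1 - ‖q‖ := by linarith
  rw [M]
  positivity

lemma norm_ST_le (q : ℂ) (hq : ‖q‖ < 1) (k : ℕ) : ‖Sf q k - Tf q k‖ ≤ M q := by
  have hS := tsum_norm_le_geom hq (sTerm q k) (sTerm_bound q hq k)
  have hT := tsum_norm_le_geom hq (tTerm q k) (tTerm_bound q hq k)
  calc ‖Sf q k - Tf q k‖ ≤ ‖Sf q k‖ + ‖Tf q k‖ := norm_sub_le _ _
  _ ≤ M q := by rw [M, Sf, Tf]; linarith

lemma Pb_succ (q : ℂ) (k n : ℕ) : Pb q k (n+1) = Pb q k n * (1 - q^(2*k+3+2*n)) :=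
  Finset.prod_range_succ _ _

lemma Pb_succ' (q : ℂ) (k n : ℕ) : Pb q k (n+1) = (1 - q^(2*k+3)) * Pb q (k+1) n := by
  simp only [Pb]
  rw [Finset.prod_range_succ']
  rw [show 2*k+3+2*0 = 2*k+3 from by omega, mul_comm]
  congr 1
  exact Finset.prod_congr rfl fun j _ => by
    rw [show 2*k+3+2*(j+1) = 2*(k+1)+3+2*j from by omega]

lemma Pt_succ' (q : ℂ) (k n : ℕ) : Pt q k (n+1) = (1 - q^(2*k+1)) * Pt q (k+1) n := by
  simp only [Pt]
  rw [Finset.prod_range_succ']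
  rw [show 2*k+1+2*0 = 2*k+1 from by omega, mul_comm]
  congr 1
  exact Finset.prod_congr rfl fun j _ => by
    rw [show 2*k+1+2*(j+1) = 2*(k+1)+1+2*j from by omega]

lemma sTerm_zero (q : ℂ) (k : ℕ) : sTerm q k 0 = 1 := by
  simp [sTerm, Pb]

lemma tTerm_zero (q : ℂ) (k : ℕ) : tTerm q k 0 = 1 / (1 - q^(2*k+1)) := by
  simp [tTerm, Pb, Pt]

lemma sTerm_rec (q : ℂ) (k n : ℕ)
    (hPbn : Pb q k n ≠ 0) (hPb1 : Pb q (k+1) n ≠ 0)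
    (hβ : (1:ℂ) - q^(2*k+3) ≠ 0) (hw : (1:ℂ) - q^(2*k+3+2*n) ≠ 0) :
    sTerm q k (n+1) - q^(2*k+1) * sTerm q k n
      = (q^(4*k+4)/(1 - q^(2*k+3))) * sTerm q (k+1) n := by
  have e1 : q^(2*k+1) * sTerm q k n
      = q^((2*k+1)*(n+1)) * (1 - q^(2*k+3+2*n)) / Pb q k (n+1) := by
    rw [sTerm, Pb_succ]
    field_simp
    ring
  have e2 : (q^(4*k+4)/(1 - q^(2*k+3))) * sTerm q (k+1) n
      = q^((2*k+1)*(n+1)) * q^(2*k+3+2*n) / Pb q k (n+1) := by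
    rw [sTerm, Pb_succ']
    field_simp
    ring
  rw [e1, e2, sTerm]
  rw [div_sub_div_same]
  congr 1
  ring

lemma tTerm_rec (q : ℂ) (k n : ℕ)
    (hPb1 : Pb q (k+1) n ≠ 0) (hPt1 : Pt q (k+1) (n+1) ≠ 0)
    (hβ : (1:ℂ) - q^(2*k+3) ≠ 0) (hτ : (1:ℂ) - q^(2*k+1) ≠ 0) :
    (1 - q^(2*k+1)) * tTerm q k (n+1)
      = (q^(4*k+4)/(1 - q^(2*k+3))) * tTerm q (k+1) n := by
  simp only [tTerm]
  rw [Pb_succ', Pt_succ']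
  field_simp
  ring

lemma recS (q : ℂ) (hq : ‖q‖ < 1) (k : ℕ) :
    (1 - q^(2*k+1)) * Sf q k = 1 + (q^(4*k+4)/(1 - q^(2*k+3))) * Sf q (k+1) := by
  have hs := sSummable q hq k
  have hs1 : Summable (fun n => sTerm q k (n+1)) := (summable_nat_add_iff 1).2 hs
  have hsm : Summable (fun n => q^(2*k+1) * sTerm q k n) := hs.mul_left _
  have h1 : Sf q k = 1 + ∑' n, sTerm q k (n+1) := by
    rw [Sf, Summable.tsum_eq_zero_add hs, sTerm_zero]
  have h2 : q^(2*k+1) * Sf q k = ∑' n, q^(2*k+1) * sTerm q k n := tsum_mul_left.symm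
  have h3 : (1 - q^(2*k+1)) * Sf q k
      = 1 + ∑' n, (sTerm q k (n+1) - q^(2*k+1) * sTerm q k n) := by
    rw [Summable.tsum_sub hs1 hsm, sub_mul, one_mul, h2]
    rw [h1]
    ring
  rw [h3]
  congr 1
  calc ∑' n, (sTerm q k (n+1) - q^(2*k+1) * sTerm q k n)
      = ∑' n, (q^(4*k+4)/(1 - q^(2*k+3))) * sTerm q (k+1) n := by
        apply tsum_congr
        intro n
        exact sTerm_rec q k n (Pb_ne q hq k n) (Pb_ne q hq (k+1) n)
          (one_sub_ne hq (by omega)) (one_sub_ne hq (by omega))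
  _ = (q^(4*k+4)/(1 - q^(2*k+3))) * Sf q (k+1) := tsum_mul_left

lemma recT (q : ℂ) (hq : ‖q‖ < 1) (k : ℕ) :
    (1 - q^(2*k+1)) * Tf q k = 1 + (q^(4*k+4)/(1 - q^(2*k+3))) * Tf q (k+1) := by
  have ht := tSummable q hq k
  have hτ : (1:ℂ) - q^(2*k+1) ≠ 0 := one_sub_ne hq (by omega)
  have h1 : Tf q k = 1/(1 - q^(2*k+1)) + ∑' n, tTerm q k (n+1) := by
    rw [Tf, Summable.tsum_eq_zero_add ht, tTerm_zero]
  rw [h1, mul_add]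
  congr 1
  · field_simp
  · calc (1 - q^(2*k+1)) * ∑' n, tTerm q k (n+1)
        = ∑' n, (1 - q^(2*k+1)) * tTerm q k (n+1) := tsum_mul_left.symm
    _ = ∑' n, (q^(4*k+4)/(1 - q^(2*k+3))) * tTerm q (k+1) n := by
        apply tsum_congr
        intro n
        exact tTerm_rec q k n (Pb_ne q hq (k+1) n) (Pt_ne q hq (k+1) (n+1))
          (one_sub_ne hq (by omega)) hτ
    _ = (q^(4*k+4)/(1 - q^(2*k+3))) * Tf q (k+1) := tsum_mul_left

lemma stepST (q : ℂ) (hq : ‖q‖ < 1) (k : ℕ) :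
    Sf q k - Tf q k
      = (q^(4*k+4)/((1 - q^(2*k+1))*(1 - q^(2*k+3)))) * (Sf q (k+1) - Tf q (k+1)) := by
  have hτ : (1:ℂ) - q^(2*k+1) ≠ 0 := one_sub_ne hq (by omega)
  have hβ : (1:ℂ) - q^(2*k+3) ≠ 0 := one_sub_ne hq (by omega)
  have h3 : (1 - q^(2*k+1)) * (Sf q k - Tf q k)
      = (q^(4*k+4)/(1 - q^(2*k+3))) * (Sf q (k+1) - Tf q (k+1)) := by
    linear_combination recS q hq k - recT q hq k
  apply mul_left_cancel₀ hτ
  rw [h3]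
  field_simp

lemma iterST (q : ℂ) (hq : ‖q‖ < 1) (k : ℕ) :
    Sf q 0 - Tf q 0
      = (∏ j ∈ range k, (q^(4*j+4)/((1 - q^(2*j+1))*(1 - q^(2*j+3)))))
          * (Sf q k - Tf q k) := by
  induction k with
  | zero => simp
  | succ k ih =>
      rw [ih, stepST q hq k, prod_range_succ]
      ring

lemma norm_factor_le (q : ℂ) (hq : ‖q‖ < 1) (m : ℕ) (hm : 1 ≤ m) :
    1 - ‖q‖ ≤ ‖1 - q^m‖ := by
  have h0 := norm_nonneg q
  have : ‖q‖^m ≤ ‖q‖ := pow_le_of_le_one h0 hq.le (by omega)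
  have := norm_one_sub_ge q m
  linarith

lemma norm_c_le (q : ℂ) (hq : ‖q‖ < 1) (j : ℕ) :
    ‖q^(4*j+4)/((1 - q^(2*j+1))*(1 - q^(2*j+3)))‖ ≤ ‖q‖^(4*j+4)/(1-‖q‖)^2 := by
  have h0 := norm_nonneg q
  have h1 : (0:ℝ) < 1 - ‖q‖ := by linarith
  rw [norm_div, norm_pow, norm_mul]
  have ha := norm_factor_le q hq (2*j+1) (by omega)
  have hb := norm_factor_le q hq (2*j+3) (by omega)
  apply div_le_div_of_nonneg_left (pow_nonneg h0 _) (by positivity)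
  calc (1-‖q‖)^2 = (1-‖q‖)*(1-‖q‖) := sq (1-‖q‖)
  _ ≤ ‖1 - q^(2*j+1)‖*‖1 - q^(2*j+3)‖ := by
      apply mul_le_mul ha hb h1.le (le_trans h1.le ha)

lemma sum_aux (k : ℕ) : ∑ j ∈ range k, (4*j+4) = (2*k+2)*k := by
  induction k with
  | zero => simp
  | succ k ih => rw [Finset.sum_range_succ, ih]; ring

lemma prod_c_eq (q : ℂ) (k : ℕ) :
    ∏ j ∈ range k, (‖q‖^(4*j+4)/(1-‖q‖)^2)
      = (‖q‖^(2*k+2)/(1-‖q‖)^2)^k := by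
  rw [Finset.prod_div_distrib, Finset.prod_const, Finset.card_range,
    Finset.prod_pow_eq_pow_sum, sum_aux, pow_mul, div_pow]

lemma ST_eq (q : ℂ) (hq : ‖q‖ < 1) : Sf q 0 = Tf q 0 := by
  have h0 := norm_nonneg q
  have h1 : (0:ℝ) < 1 - ‖q‖ := by linarith
  have hM := M_nonneg q hq
  have key : ∀ k, ‖Sf q 0 - Tf q 0‖ ≤ (‖q‖^(2*k+2)/(1-‖q‖)^2)^k * M q := by
    intro k
    rw [iterST q hq k, norm_mul]
    have hp : ‖∏ j ∈ range k, (q^(4*j+4)/((1 - q^(2*j+1))*(1 - q^(2*j+3))))‖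
        ≤ ∏ j ∈ range k, (‖q‖^(4*j+4)/(1-‖q‖)^2) := by
      rw [norm_prod]
      apply Finset.prod_le_prod (fun j _ => norm_nonneg _) (fun j _ => norm_c_le q hq j)
    calc ‖∏ j ∈ range k, (q^(4*j+4)/((1 - q^(2*j+1))*(1 - q^(2*j+3))))‖ * ‖Sf q k - Tf q k‖
        ≤ (∏ j ∈ range k, (‖q‖^(4*j+4)/(1-‖q‖)^2)) * M q := by
          apply mul_le_mul hp (norm_ST_le q hq k) (norm_nonneg _)
          apply Finset.prod_nonneg
          intro j _
          positivity
    _ = (‖q‖^(2*k+2)/(1-‖q‖)^2)^k * M q := by rw [prod_c_eq q k]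
  have hlim : Filter.Tendsto (fun k : ℕ => (‖q‖^(2*k+2)/(1-‖q‖)^2)^k * M q)
      Filter.atTop (nhds 0) := by
    have hhalf : Filter.Tendsto (fun k : ℕ => (1/2:ℝ)^k * M q) Filter.atTop (nhds 0) := by
      have := (tendsto_pow_atTop_nhds_zero_of_lt_one (by norm_num : (0:ℝ) ≤ 1/2)
        (by norm_num : (1/2:ℝ) < 1)).mul_const (M q)
      simpa using this
    apply squeeze_zero' ?_ ?_ hhalf
    · filter_upwards with k
      positivity
    · have hev : ∀ᶠ k : ℕ in Filter.atTop, ‖q‖^k < (1-‖q‖)^2/2 :=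
        (tendsto_pow_atTop_nhds_zero_of_lt_one h0 hq).eventually_lt_const (by positivity)
      filter_upwards [hev] with k hk
      have hb : ‖q‖^(2*k+2)/(1-‖q‖)^2 ≤ 1/2 := by
        rw [div_le_iff₀ (by positivity)]
        calc ‖q‖^(2*k+2) ≤ ‖q‖^k := pow_le_pow_of_le_one h0 hq.le (by omega)
        _ ≤ (1-‖q‖)^2/2 := hk.le
        _ = 1/2 * (1-‖q‖)^2 := by ring
      apply mul_le_mul_of_nonneg_right _ hM
      exact pow_le_pow_left₀ (by positivity) hb k
  have hle : ‖Sf q 0 - Tf q 0‖ ≤ 0 := ge_of_tendsto' hlim key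
  have h2 : Sf q 0 - Tf q 0 = 0 := by
    have hge := norm_nonneg (Sf q 0 - Tf q 0)
    exact norm_eq_zero.1 (le_antisymm hle hge)
  exact sub_eq_zero.1 h2

lemma qPoch_eq (q : ℂ) (n : ℕ) : qPoch q (q^2) n = Pt q 0 n := by
  apply Finset.prod_congr rfl
  intro k _
  rw [show (2*0+1+2*k) = 2*k+1 from by omega, ← pow_mul, ← pow_succ']

lemma Pt_fact (q : ℂ) (n : ℕ) : Pt q 0 (n+1) = (1-q) * Pb q 0 n := by
  rw [Pt_succ', show (2*0+1) = 1 from by norm_num, pow_one]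
  congr 1

theorem omega_second_form (q : ℂ) (hq : ‖q‖ < 1) :
    (∑' n : ℕ, q ^ (2 * n * (n + 1)) / (qPoch q (q ^ 2) (n + 1)) ^ 2) =
      ∑' n : ℕ, q ^ n / qPoch q (q ^ 2) (n + 1) := by
  have hq1 : (1:ℂ) - q ≠ 0 := by
    have := one_sub_ne hq (le_refl 1); rwa [pow_one] at this
  have hL : ∀ n : ℕ, q ^ (2*n*(n+1)) / (qPoch q (q^2) (n+1))^2
      = (1-q)⁻¹ * tTerm q 0 n := by
    intro n
    rw [qPoch_eq, Pt_fact, tTerm, Pt_fact]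
    have h1 := Pb_ne q hq 0 n
    field_simp
    ring
  have hR : ∀ n : ℕ, q ^ n / qPoch q (q^2) (n+1) = (1-q)⁻¹ * sTerm q 0 n := by
    intro n
    rw [qPoch_eq, Pt_fact, sTerm]
    have h1 := Pb_ne q hq 0 n
    field_simp
    ring
  calc (∑' n : ℕ, q ^ (2*n*(n+1)) / (qPoch q (q^2) (n+1))^2)
      = ∑' n : ℕ, (1-q)⁻¹ * tTerm q 0 n := tsum_congr hL
  _ = (1-q)⁻¹ * Tf q 0 := tsum_mul_left
  _ = (1-q)⁻¹ * Sf q 0 := by rw [ST_eq q hq]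
  _ = ∑' n : ℕ, (1-q)⁻¹ * sTerm q 0 n := tsum_mul_left.symm
  _ = ∑' n : ℕ, q ^ n / qPoch q (q^2) (n+1) := (tsum_congr hR).symm
end

section
/- Let q be a complex number with |q| < 1. Then the third order mock theta function f(q) satisfies \sum_{n=0}^{\infty} \frac{q^{n^2}}{[(-q;q)_n]^2} = 2 - \sum_{n=0}^{\infty} (-1)^n \frac{q^n}{(-q;q)_n}. -/
open scoped BigOperators
open Filter

namespace MockThetaAux


noncomputable def D (q : ℂ) (m n : ℕ) : ℂ := qPoch (-(q ^ (m + 1))) q n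

noncomputable def psi (q : ℂ) (m : ℕ) : ℂ := ∑' n : ℕ, (-(q ^ (m + 1))) ^ n / D q m n

section

variable {q : ℂ}

lemma D_zero (m : ℕ) : D q m 0 = 1 := by simp [D, qPoch]

lemma D_succ (m n : ℕ) : D q m (n + 1) = D q m n * (1 + q ^ (m + 1) * q ^ n) := by
  unfold D qPoch
  rw [Finset.prod_range_succ]
  ring

lemma D_shift (m n : ℕ) : D q m (n + 1) = (1 + q ^ (m + 1)) * D q (m + 1) n := by
  unfold D qPoch
  rw [Finset.prod_range_succ']
  rw [Finset.prod_congr rfl (fun k _ => show (1 - -q ^ (m + 1) * q ^ (k + 1)) = (1 - -q ^ (m + 1 + 1) * q ^ k) from by ring)]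
  rw [mul_comm]
  congr 1
  ring

lemma one_add_ne_zero {z : ℂ} (hz : ‖z‖ < 1) : (1 : ℂ) + z ≠ 0 := by
  intro h
  have : z = -1 := by linear_combination h
  rw [this] at hz
  simp at hz

lemma norm_one_add_ge (z : ℂ) : 1 - ‖z‖ ≤ ‖1 + z‖ := by
  have h := norm_sub_norm_le (1 : ℂ) (-z)
  simpa [sub_neg_eq_add] using h

variable (hq : ‖q‖ < 1)
include hq

lemma factor_norm_lt (m k : ℕ) : ‖q ^ (m + 1) * q ^ k‖ < 1 := by
  have h0 : (0:ℝ) ≤ ‖q‖ := norm_nonneg q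
  have h1 : ‖q ^ (m + 1)‖ ≤ ‖q‖ := by
    rw [norm_pow]
    calc ‖q‖ ^ (m + 1) ≤ ‖q‖ ^ 1 := pow_le_pow_of_le_one h0 hq.le (by omega)
    _ = ‖q‖ := pow_one _
  have h2 : ‖q ^ k‖ ≤ 1 := by rw [norm_pow]; exact pow_le_one₀ h0 hq.le
  calc ‖q ^ (m + 1) * q ^ k‖ = ‖q ^ (m + 1)‖ * ‖q ^ k‖ := norm_mul _ _
  _ ≤ ‖q‖ * 1 := by
        exact mul_le_mul h1 h2 (norm_nonneg _) h0
  _ = ‖q‖ := mul_one _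
  _ < 1 := hq

lemma D_ne_zero (m n : ℕ) : D q m n ≠ 0 := by
  unfold D qPoch
  refine Finset.prod_ne_zero_iff.2 fun k _ => ?_
  have : (1 : ℂ) + q ^ (m + 1) * q ^ k ≠ 0 := one_add_ne_zero (factor_norm_lt hq m k)
  intro h
  apply this
  linear_combination h

lemma w_ne_zero (m : ℕ) : (1 : ℂ) + q ^ (m + 1) ≠ 0 := by
  have := factor_norm_lt hq m 0
  simpa using one_add_ne_zero (by simpa using this)

end

/-- Weierstrass product inequality. -/
lemma weier (f : ℕ → ℝ) (h0 : ∀ i, 0 ≤ f i) (h1 : ∀ i, f i ≤ 1) (n : ℕ) :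
    1 - ∑ i ∈ Finset.range n, f i ≤ ∏ i ∈ Finset.range n, (1 - f i) := by
  induction n with
  | zero => simp
  | succ n ih =>
    rw [Finset.sum_range_succ, Finset.prod_range_succ]
    have hP0 : (0:ℝ) ≤ ∏ i ∈ Finset.range n, (1 - f i) :=
      Finset.prod_nonneg fun i _ => by linarith [h1 i]
    have hS0 : (0:ℝ) ≤ ∑ i ∈ Finset.range n, f i :=
      Finset.sum_nonneg fun i _ => h0 i
    nlinarith [h0 n, h1 n, ih]


section
variable {q : ℂ}

lemma exists_c (hq : ‖q‖ < 1) : ∃ c : ℝ, 0 < c ∧ ∀ m n : ℕ, c ≤ ‖D q m n‖ := by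
  set r := ‖q‖ with hr_def
  have h0 : (0:ℝ) ≤ r := norm_nonneg q
  have hr : r < 1 := hq
  obtain ⟨N, hN⟩ : ∃ N : ℕ, r ^ N < (1 - r) / 2 :=
    exists_pow_lt_of_lt_one (by linarith) hr
  set g : ℕ → ℝ := fun n => ∏ k ∈ Finset.range n, (1 - r ^ (1 + k)) with hg_def
  have hfac_nonneg : ∀ j : ℕ, (0:ℝ) ≤ 1 - r ^ (1 + j) := fun j => by
    have : r ^ (1 + j) ≤ 1 := pow_le_one₀ h0 hr.le
    linarith
  have hfac_le_one : ∀ j : ℕ, (1:ℝ) - r ^ (1 + j) ≤ 1 := fun j => by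
    have : (0:ℝ) ≤ r ^ (1 + j) := pow_nonneg h0 _
    linarith
  have hgpos : 0 < g N := by
    refine Finset.prod_pos fun k _ => ?_
    have : r ^ (1 + k) < 1 := pow_lt_one₀ h0 hr (by omega)
    linarith
  have hgnonneg : ∀ n, 0 ≤ g n := fun n =>
    Finset.prod_nonneg fun k _ => hfac_nonneg k
  refine ⟨g N / 2, by positivity, fun m n => ?_⟩
  -- first: g N / 2 ≤ g n
  have key : g N / 2 ≤ g n := by
    rcases le_or_gt n N with h | h
    · obtain ⟨t, rfl⟩ : ∃ t, N = n + t := ⟨N - n, by omega⟩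
      have hsplit : g (n + t) = g n * ∏ k ∈ Finset.range t, (1 - r ^ (1 + (n + k))) := by
        simp [hg_def, Finset.prod_range_add]
      have hle1 : ∏ k ∈ Finset.range t, (1 - r ^ (1 + (n + k))) ≤ 1 :=
        Finset.prod_le_one (fun k _ => hfac_nonneg (n + k)) (fun k _ => hfac_le_one (n + k))
      have : g (n + t) ≤ g n := by
        rw [hsplit]
        exact mul_le_of_le_one_right (hgnonneg n) hle1
      linarith [hgnonneg n]
    · obtain ⟨t, rfl⟩ : ∃ t, n = N + t := ⟨n - N, by omega⟩
      have hsplit : g (N + t) = g N * ∏ k ∈ Finset.range t, (1 - r ^ (1 + (N + k))) := by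
        simp [hg_def, Finset.prod_range_add]
      have hsum : ∑ k ∈ Finset.range t, r ^ (1 + (N + k)) ≤ 1 / 2 := by
        have h1 : ∀ k, r ^ (1 + (N + k)) = r ^ (1 + N) * r ^ k := fun k => by
          rw [← pow_add]; ring_nf
        calc ∑ k ∈ Finset.range t, r ^ (1 + (N + k))
            = r ^ (1 + N) * ∑ k ∈ Finset.range t, r ^ k := by
              rw [Finset.mul_sum]; exact Finset.sum_congr rfl fun k _ => h1 k
          _ ≤ r ^ (1 + N) * (1 - r)⁻¹ := by
              refine mul_le_mul_of_nonneg_left ?_ (pow_nonneg h0 _)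
              have hs : ∑ k ∈ Finset.range t, r ^ k ≤ ∑' k : ℕ, r ^ k :=
                Summable.sum_le_tsum _ (fun i _ => pow_nonneg h0 i)
                  (summable_geometric_of_lt_one h0 hr)
              rw [tsum_geometric_of_lt_one h0 hr] at hs
              exact hs
          _ ≤ ((1 - r) / 2) * (1 - r)⁻¹ := by
              refine mul_le_mul_of_nonneg_right ?_ (by
                have h1r : (0:ℝ) < 1 - r := by linarith
                positivity)
              have : r ^ (1 + N) ≤ r ^ N := by
                exact pow_le_pow_of_le_one h0 hr.le (by omega)
              linarith
          _ = 1 / 2 := by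
              have h1r : (1:ℝ) - r ≠ 0 := by intro h; rw [sub_eq_zero] at h; linarith [h.symm]
              field_simp
      have hW : (1:ℝ) - ∑ k ∈ Finset.range t, r ^ (1 + (N + k))
          ≤ ∏ k ∈ Finset.range t, (1 - r ^ (1 + (N + k))) :=
        weier (fun k => r ^ (1 + (N + k))) (fun k => pow_nonneg h0 _)
          (fun k => pow_le_one₀ h0 hr.le) t
      have hhalf : (1:ℝ) / 2 ≤ ∏ k ∈ Finset.range t, (1 - r ^ (1 + (N + k))) := by
        linarith
      calc g N / 2 = g N * (1 / 2) := by ring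
        _ ≤ g N * ∏ k ∈ Finset.range t, (1 - r ^ (1 + (N + k))) :=
            mul_le_mul_of_nonneg_left hhalf (hgnonneg N)
        _ = g (N + t) := hsplit.symm
  -- second: g n ≤ ‖D q m n‖
  have step : g n ≤ ‖D q m n‖ := by
    have hnorm : ‖D q m n‖ = ∏ k ∈ Finset.range n, ‖1 - (-(q ^ (m + 1))) * q ^ k‖ := by
      unfold D qPoch
      rw [norm_prod]
    rw [hnorm]
    have hmid : ∀ k : ℕ, (0:ℝ) ≤ 1 - r ^ (m + 1 + k) := fun k => by
      have : r ^ (m + 1 + k) ≤ 1 := pow_le_one₀ h0 hr.le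
      linarith
    calc g n ≤ ∏ k ∈ Finset.range n, (1 - r ^ (m + 1 + k)) := by
          refine Finset.prod_le_prod (fun k _ => hfac_nonneg k) fun k _ => ?_
          have : r ^ (m + 1 + k) ≤ r ^ (1 + k) := pow_le_pow_of_le_one h0 hr.le (by omega)
          linarith
      _ ≤ ∏ k ∈ Finset.range n, ‖1 - (-(q ^ (m + 1))) * q ^ k‖ := by
          refine Finset.prod_le_prod (fun k _ => hmid k) fun k _ => ?_
          have h1 : (1:ℂ) - (-(q ^ (m + 1))) * q ^ k = 1 + q ^ (m + 1) * q ^ k := by ring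
          have h2 : ‖q ^ (m + 1) * q ^ k‖ = r ^ (m + 1 + k) := by
            rw [← pow_add]
            exact norm_pow q _
          rw [h1]
          calc (1:ℝ) - r ^ (m + 1 + k) = 1 - ‖q ^ (m + 1) * q ^ k‖ := by rw [h2]
            _ ≤ ‖1 + q ^ (m + 1) * q ^ k‖ := norm_one_add_ge _
  linarith


lemma summable_aux (hq : ‖q‖ < 1) (m j : ℕ) :
    Summable (fun n : ℕ => (-(q ^ (m + 1))) ^ n / D q j n) := by
  obtain ⟨c, hc, hcD⟩ := exists_c hq
  have h0 : (0:ℝ) ≤ ‖q‖ := norm_nonneg q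
  refine Summable.of_norm_bounded (g := fun n => ‖q‖ ^ n / c) (Summable.div_const
    (summable_geometric_of_lt_one h0 hq) c) fun n => ?_
  rw [norm_div]
  have hnum : ‖(-(q ^ (m + 1))) ^ n‖ ≤ ‖q‖ ^ n := by
    rw [norm_pow, norm_neg, norm_pow]
    refine pow_le_pow_left₀ (by positivity) ?_ n
    calc ‖q‖ ^ (m+1) ≤ ‖q‖ ^ 1 := pow_le_pow_of_le_one h0 hq.le (by omega)
    _ = ‖q‖ := pow_one _
  exact div_le_div₀ (by positivity) hnum hc (hcD j n)

lemma psi_fe (hq : ‖q‖ < 1) (m : ℕ) :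
    psi q m = 1 / (1 + q ^ (m + 1)) +
      (q ^ (m + 1)) ^ 2 / (1 + q ^ (m + 1)) ^ 2 * psi q (m + 1) := by
  set u : ℂ := -(q ^ (m + 1)) with hu
  have hw : (1 : ℂ) + q ^ (m + 1) ≠ 0 := w_ne_zero hq m
  have hDne : ∀ j n, D q j n ≠ 0 := D_ne_zero hq
  have huq : -(q ^ (m + 1 + 1)) = u * q := by rw [hu, pow_succ]; ring
  have hS1 : Summable (fun n : ℕ => u ^ n / D q m n) := summable_aux hq m m
  have hS2 : Summable (fun n : ℕ => u ^ n / D q (m + 1) n) := summable_aux hq m (m + 1)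
  have hS3 : Summable (fun n : ℕ => (u * q) ^ n / D q (m + 1) n) := by
    have := summable_aux hq (m + 1) (m + 1)
    simpa [huq] using this
  set χ : ℂ := ∑' n : ℕ, u ^ n / D q (m + 1) n with hχ
  -- Step A
  have stepA : psi q m = 1 + u / (1 + q ^ (m + 1)) * χ := by
    have h1 : psi q m = u ^ 0 / D q m 0 + ∑' n : ℕ, u ^ (n + 1) / D q m (n + 1) :=
      Summable.tsum_eq_zero_add hS1
    have h2 : ∀ n : ℕ, u ^ (n + 1) / D q m (n + 1)
        = u / (1 + q ^ (m + 1)) * (u ^ n / D q (m + 1) n) := by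
      intro n
      rw [D_shift, pow_succ, div_mul_div_comm]
      rw [mul_comm (u ^ n) u]
    rw [h1, D_zero]
    simp only [pow_zero]
    rw [tsum_congr h2, tsum_mul_left]
    norm_num
    exact Or.inl rfl
  -- ψ(m+1) shifted
  have hpsi1 : psi q (m + 1) = ∑' n : ℕ, (u * q) ^ n / D q (m + 1) n := by
    unfold psi
    exact tsum_congr fun n => by rw [huq]
  have hpsi1_shift : psi q (m + 1)
      = 1 + ∑' n : ℕ, (u * q) ^ (n + 1) / D q (m + 1) (n + 1) := by
    rw [hpsi1, Summable.tsum_eq_zero_add hS3, D_zero, pow_zero]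
    norm_num
  -- Step B
  have hS3' : Summable (fun n : ℕ => (u * q) ^ (n + 1) / D q (m + 1) (n + 1)) := by
    exact hS3.comp_injective (add_left_injective 1)
  have stepB : χ - psi q (m + 1)
      = u * χ - (1 + q ^ (m + 1)) * (psi q (m + 1) - 1) := by
    have hdiff : χ - psi q (m + 1) = ∑' n : ℕ, (u ^ n - (u * q) ^ n) / D q (m + 1) n := by
      rw [hpsi1, ← Summable.tsum_sub hS2 hS3]
      exact tsum_congr fun n => by rw [sub_div]
    have hFsum : Summable (fun n : ℕ => (u ^ n - (u * q) ^ n) / D q (m + 1) n) := by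
      have := hS2.sub hS3
      refine this.congr fun n => ?_
      rw [sub_div]
    have hshift : (∑' n : ℕ, (u ^ n - (u * q) ^ n) / D q (m + 1) n)
        = ∑' n : ℕ, (u ^ (n + 1) - (u * q) ^ (n + 1)) / D q (m + 1) (n + 1) := by
      rw [Summable.tsum_eq_zero_add hFsum]
      simp
    have termB : ∀ n : ℕ, (u ^ (n + 1) - (u * q) ^ (n + 1)) / D q (m + 1) (n + 1)
        = u * (u ^ n / D q (m + 1) n)
          - (1 + q ^ (m + 1)) * ((u * q) ^ (n + 1) / D q (m + 1) (n + 1)) := by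
      intro n
      have hD : D q (m + 1) (n + 1) = D q (m + 1) n * (1 + q ^ (m + 1 + 1) * q ^ n) :=
        D_succ (m + 1) n
      have hf : (1 : ℂ) + q ^ (m + 1 + 1) * q ^ n ≠ 0 :=
        one_add_ne_zero (factor_norm_lt hq (m + 1) n)
      have hDn : D q (m + 1) n ≠ 0 := hDne (m + 1) n
      rw [hD]
      field_simp
      ring
    have hsplit : (∑' n : ℕ, (u ^ (n + 1) - (u * q) ^ (n + 1)) / D q (m + 1) (n + 1))
        = u * χ - (1 + q ^ (m + 1)) * ∑' n : ℕ, (u * q) ^ (n + 1) / D q (m + 1) (n + 1) := by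
      rw [tsum_congr termB, Summable.tsum_sub (hS2.mul_left u) (hS3'.mul_left _),
        tsum_mul_left, tsum_mul_left]
    rw [hdiff, hshift, hsplit]
    have h9 : (∑' n : ℕ, (u * q) ^ (n + 1) / D q (m + 1) (n + 1)) = psi q (m + 1) - 1 := by
      rw [hpsi1_shift]; ring
    rw [h9]
  -- Step C
  have hC : χ * (1 + q ^ (m + 1)) = u * psi q (m + 1) + (1 + q ^ (m + 1)) := by
    have hu' : u = -(q ^ (m + 1)) := hu
    linear_combination stepB - psi q (m + 1) * hu' - χ * hu'
  have hu' : u = -(q ^ (m + 1)) := hu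
  have hCψ : χ = (u * psi q (m + 1) + (1 + q ^ (m + 1))) / (1 + q ^ (m + 1)) := by
    rw [eq_div_iff hw]; exact hC
  rw [stepA, hCψ, hu']
  field_simp
  ring


/-- `P M = D q 0 M` abbrev not needed; relation at level 0. -/
lemma P_succ (n : ℕ) : D q 0 (n + 1) = D q 0 n * (1 + q ^ (n + 1)) := by
  rw [D_succ]
  rw [show q ^ (0 + 1) * q ^ n = q ^ (n + 1) by rw [← pow_add]; congr 1; omega]

lemma iterate (hq : ‖q‖ < 1) (M : ℕ) :
    psi q 0 = (∑ n ∈ Finset.range M, q ^ (n ^ 2 + n) / (D q 0 n * D q 0 (n + 1)))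
      + q ^ (M ^ 2 + M) / (D q 0 M) ^ 2 * psi q M := by
  induction M with
  | zero => simp [D_zero]
  | succ M ih =>
    rw [Finset.sum_range_succ, ih, psi_fe hq M]
    have hPM : D q 0 M ≠ 0 := D_ne_zero hq 0 M
    have hw : (1 : ℂ) + q ^ (M + 1) ≠ 0 := w_ne_zero hq M
    have hP1 : D q 0 (M + 1) = D q 0 M * (1 + q ^ (M + 1)) := P_succ M
    have hexp1 : q ^ ((M + 1) ^ 2 + (M + 1)) = q ^ (M ^ 2 + M) * (q ^ (M + 1)) ^ 2 := by
      rw [← pow_mul, ← pow_add]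
      congr 1
      ring
    have hexp2 : q ^ (M ^ 2 + M + (M + 1)) = q ^ (M ^ 2 + M) * q ^ (M + 1) := by
      rw [← pow_add]
    rw [hP1, hexp1]
    field_simp [hPM, hw]
    ring

lemma psi_bound (hq : ‖q‖ < 1) : ∃ B : ℝ, 0 ≤ B ∧ ∀ m, ‖psi q m‖ ≤ B := by
  obtain ⟨c, hc, hcD⟩ := exists_c hq
  have h0 : (0:ℝ) ≤ ‖q‖ := norm_nonneg q
  refine ⟨(1 - ‖q‖)⁻¹ / c, div_nonneg (inv_nonneg.2 (by linarith)) hc.le, fun m => ?_⟩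
  have hterm : ∀ n : ℕ, ‖(-(q ^ (m + 1))) ^ n / D q m n‖ ≤ ‖q‖ ^ n / c := by
    intro n
    rw [norm_div]
    have hnum : ‖(-(q ^ (m + 1))) ^ n‖ ≤ ‖q‖ ^ n := by
      rw [norm_pow, norm_neg, norm_pow]
      refine pow_le_pow_left₀ (by positivity) ?_ n
      calc ‖q‖ ^ (m + 1) ≤ ‖q‖ ^ 1 := pow_le_pow_of_le_one h0 hq.le (by omega)
      _ = ‖q‖ := pow_one _
    exact div_le_div₀ (by positivity) hnum hc (hcD m n)
  have hgeo : Summable (fun n : ℕ => ‖q‖ ^ n / c) :=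
    (summable_geometric_of_lt_one h0 hq).div_const c
  have hnsum : Summable (fun n : ℕ => ‖(-(q ^ (m + 1))) ^ n / D q m n‖) :=
    Summable.of_nonneg_of_le (fun n => norm_nonneg _) hterm hgeo
  calc ‖psi q m‖ ≤ ∑' n : ℕ, ‖(-(q ^ (m + 1))) ^ n / D q m n‖ :=
        norm_tsum_le_tsum_norm hnsum
    _ ≤ ∑' n : ℕ, ‖q‖ ^ n / c := Summable.tsum_le_tsum hterm hnsum hgeo
    _ = (1 - ‖q‖)⁻¹ / c := by
        rw [tsum_div_const, tsum_geometric_of_lt_one h0 hq]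

lemma rem_tendsto (hq : ‖q‖ < 1) :
    Tendsto (fun M : ℕ => q ^ (M ^ 2 + M) / (D q 0 M) ^ 2 * psi q M) atTop (nhds 0) := by
  obtain ⟨c, hc, hcD⟩ := exists_c hq
  obtain ⟨B, hB0, hB⟩ := psi_bound hq
  have h0 : (0:ℝ) ≤ ‖q‖ := norm_nonneg q
  have hb : Tendsto (fun M : ℕ => ‖q‖ ^ M * (B / c ^ 2)) atTop (nhds 0) := by
    simpa using (tendsto_pow_atTop_nhds_zero_of_lt_one h0 hq).mul_const (B / c ^ 2)
  refine squeeze_zero_norm (fun M => ?_) hb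
  · rw [norm_mul, norm_div, norm_pow, norm_pow]
    have h1 : ‖q‖ ^ (M ^ 2 + M) ≤ ‖q‖ ^ M :=
      pow_le_pow_of_le_one h0 hq.le (Nat.le_add_left M (M ^ 2))
    have h2 : c ^ 2 ≤ ‖D q 0 M‖ ^ 2 := by
      refine pow_le_pow_left₀ hc.le (hcD 0 M) 2
    have h3 : ‖q‖ ^ (M ^ 2 + M) / ‖D q 0 M‖ ^ 2 ≤ ‖q‖ ^ M / c ^ 2 :=
      div_le_div₀ (by positivity) h1 (by positivity) h2
    calc ‖q‖ ^ (M ^ 2 + M) / ‖D q 0 M‖ ^ 2 * ‖psi q M‖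
        ≤ (‖q‖ ^ M / c ^ 2) * B := by
          exact mul_le_mul h3 (hB M) (norm_nonneg _) (by positivity)
      _ = ‖q‖ ^ M * (B / c ^ 2) := by ring

lemma rf_summable (hq : ‖q‖ < 1) :
    Summable (fun n : ℕ => q ^ (n ^ 2 + n) / (D q 0 n * D q 0 (n + 1))) := by
  obtain ⟨c, hc, hcD⟩ := exists_c hq
  have h0 : (0:ℝ) ≤ ‖q‖ := norm_nonneg q
  refine Summable.of_norm_bounded (g := fun n => ‖q‖ ^ n / c ^ 2)
    (((summable_geometric_of_lt_one h0 hq)).div_const _) fun n => ?_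
  rw [norm_div, norm_mul]
  have h1 : ‖q ^ (n ^ 2 + n)‖ ≤ ‖q‖ ^ n := by
    rw [norm_pow]
    exact pow_le_pow_of_le_one h0 hq.le (Nat.le_add_left n (n ^ 2))
  have h2 : c ^ 2 ≤ ‖D q 0 n‖ * ‖D q 0 (n + 1)‖ := by
    calc c ^ 2 = c * c := sq c
      _ ≤ ‖D q 0 n‖ * ‖D q 0 (n + 1)‖ :=
        mul_le_mul (hcD 0 n) (hcD 0 (n + 1)) hc.le (norm_nonneg _)
  exact div_le_div₀ (by positivity) h1 (by positivity) h2

lemma a_summable (hq : ‖q‖ < 1) :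
    Summable (fun n : ℕ => q ^ (n ^ 2) / (D q 0 n) ^ 2) := by
  obtain ⟨c, hc, hcD⟩ := exists_c hq
  have h0 : (0:ℝ) ≤ ‖q‖ := norm_nonneg q
  refine Summable.of_norm_bounded (g := fun n => ‖q‖ ^ n / c ^ 2)
    (((summable_geometric_of_lt_one h0 hq)).div_const _) fun n => ?_
  rw [norm_div, norm_pow, norm_pow]
  have h1 : ‖q‖ ^ (n ^ 2) ≤ ‖q‖ ^ n :=
    pow_le_pow_of_le_one h0 hq.le (Nat.le_self_pow two_ne_zero n)
  have h2 : c ^ 2 ≤ ‖D q 0 n‖ ^ 2 := pow_le_pow_left₀ hc.le (hcD 0 n) 2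
  exact div_le_div₀ (by positivity) h1 (by positivity) h2

lemma psi0_eq_rf (hq : ‖q‖ < 1) :
    psi q 0 = ∑' n : ℕ, q ^ (n ^ 2 + n) / (D q 0 n * D q 0 (n + 1)) := by
  have h1 : Tendsto (fun M : ℕ => ∑ n ∈ Finset.range M,
      q ^ (n ^ 2 + n) / (D q 0 n * D q 0 (n + 1))) atTop
      (nhds (∑' n : ℕ, q ^ (n ^ 2 + n) / (D q 0 n * D q 0 (n + 1)))) :=
    (rf_summable hq).hasSum.tendsto_sum_nat
  have h2 : Tendsto (fun M : ℕ => ∑ n ∈ Finset.range M,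
      q ^ (n ^ 2 + n) / (D q 0 n * D q 0 (n + 1))) atTop (nhds (psi q 0)) := by
    have h3 : ∀ M : ℕ, (∑ n ∈ Finset.range M, q ^ (n ^ 2 + n) / (D q 0 n * D q 0 (n + 1)))
        = psi q 0 - q ^ (M ^ 2 + M) / (D q 0 M) ^ 2 * psi q M := fun M => by
      have := iterate hq M
      linear_combination -this
    simp only [h3]
    have := (rem_tendsto hq).const_sub (psi q 0)
    simpa using this
  exact tendsto_nhds_unique h2 h1

-- telescoping
lemma teles (hq : ‖q‖ < 1) (n : ℕ) :
    q ^ (n ^ 2) / (D q 0 n) ^ 2 + q ^ (n ^ 2 + n) / (D q 0 n * D q 0 (n + 1))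
      = q ^ (n ^ 2) * (1 + q ^ n) / (D q 0 n) ^ 2
        - q ^ ((n + 1) ^ 2) * (1 + q ^ (n + 1)) / (D q 0 (n + 1)) ^ 2 := by
  have hPn : D q 0 n ≠ 0 := D_ne_zero hq 0 n
  have hw : (1 : ℂ) + q ^ (n + 1) ≠ 0 := w_ne_zero hq n
  have hP1 : D q 0 (n + 1) = D q 0 n * (1 + q ^ (n + 1)) := P_succ n
  have e1 : q ^ ((n + 1) ^ 2) = q ^ (n ^ 2) * (q ^ n * q ^ n * q) := by
    have h : (n + 1) ^ 2 = n ^ 2 + n + n + 1 := by ring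
    rw [h, pow_add, pow_add, pow_add, pow_one]
    ring
  have e2 : q ^ (n ^ 2 + n) = q ^ (n ^ 2) * q ^ n := pow_add q _ _
  have e3 : q ^ (n + 1) = q ^ n * q := pow_succ q n
  have hw2 : (1 : ℂ) + q ^ n * q ≠ 0 := by rw [← pow_succ]; exact hw
  rw [hP1, e1, e2, e3]
  field_simp [hPn, hw2]
  ring

lemma sum_two (hq : ‖q‖ < 1) :
    (∑' n : ℕ, q ^ (n ^ 2) / (D q 0 n) ^ 2)
      + (∑' n : ℕ, q ^ (n ^ 2 + n) / (D q 0 n * D q 0 (n + 1))) = 2 := by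
  set t : ℕ → ℂ := fun n => q ^ (n ^ 2) * (1 + q ^ n) / (D q 0 n) ^ 2 with ht
  have hsum : ∀ N : ℕ, (∑ n ∈ Finset.range N,
      (q ^ (n ^ 2) / (D q 0 n) ^ 2 + q ^ (n ^ 2 + n) / (D q 0 n * D q 0 (n + 1))))
      = 2 - t N := by
    intro N
    have : (∑ n ∈ Finset.range N, (t n - t (n + 1))) = t 0 - t N :=
      Finset.sum_range_sub' t N
    rw [Finset.sum_congr rfl fun n _ => teles hq n, this]
    have ht0 : t 0 = 2 := by
      simp [ht, D_zero]
      norm_num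
    rw [ht0]
  -- t N → 0
  obtain ⟨c, hc, hcD⟩ := exists_c hq
  have h0 : (0:ℝ) ≤ ‖q‖ := norm_nonneg q
  have htt : Tendsto t atTop (nhds 0) := by
    have hb : Tendsto (fun N : ℕ => ‖q‖ ^ N * (2 / c ^ 2)) atTop (nhds 0) := by
      simpa using (tendsto_pow_atTop_nhds_zero_of_lt_one h0 hq).mul_const (2 / c ^ 2)
    refine squeeze_zero_norm (fun N => ?_) hb
    · rw [ht]
      simp only
      rw [norm_div, norm_mul, norm_pow, norm_pow]
      have h1 : ‖q‖ ^ (N ^ 2) ≤ ‖q‖ ^ N :=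
        pow_le_pow_of_le_one h0 hq.le (Nat.le_self_pow two_ne_zero N)
      have h2 : ‖(1 : ℂ) + q ^ N‖ ≤ 2 := by
        calc ‖(1 : ℂ) + q ^ N‖ ≤ ‖(1:ℂ)‖ + ‖q ^ N‖ := norm_add_le _ _
          _ ≤ 1 + 1 := by
            refine add_le_add (by simp) ?_
            rw [norm_pow]
            exact pow_le_one₀ h0 hq.le
          _ = 2 := by norm_num
      have h3 : c ^ 2 ≤ ‖D q 0 N‖ ^ 2 := pow_le_pow_left₀ hc.le (hcD 0 N) 2
      calc ‖q‖ ^ N ^ 2 * ‖(1:ℂ) + q ^ N‖ / ‖D q 0 N‖ ^ 2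
          ≤ ‖q‖ ^ N * 2 / c ^ 2 := by
            refine div_le_div₀ (by positivity) ?_ (by positivity) h3
            exact mul_le_mul h1 h2 (norm_nonneg _) (by positivity)
        _ = ‖q‖ ^ N * (2 / c ^ 2) := by ring
  have hlim1 : Tendsto (fun N : ℕ => (2 : ℂ) - t N) atTop (nhds 2) := by
    have := htt.const_sub (2 : ℂ)
    simpa using this
  have hlim2 : Tendsto (fun N : ℕ => ∑ n ∈ Finset.range N,
      (q ^ (n ^ 2) / (D q 0 n) ^ 2 + q ^ (n ^ 2 + n) / (D q 0 n * D q 0 (n + 1)))) atTop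
      (nhds ((∑' n : ℕ, q ^ (n ^ 2) / (D q 0 n) ^ 2)
        + ∑' n : ℕ, q ^ (n ^ 2 + n) / (D q 0 n * D q 0 (n + 1)))) := by
    have hs := (a_summable hq).add (rf_summable hq)
    have := hs.hasSum.tendsto_sum_nat
    rw [Summable.tsum_add (a_summable hq) (rf_summable hq)] at this
    exact this
  exact tendsto_nhds_unique (hlim2.congr fun N => hsum N) hlim1


end

end MockThetaAux

theorem f_second_form (q : ℂ) (hq : ‖q‖ < 1) :
    (∑' n : ℕ, q ^ (n ^ 2) / (qPoch (-q) q n) ^ 2) =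
      2 - ∑' n : ℕ, (-1) ^ n * q ^ n / qPoch (-q) q n := by
  have hD0 : ∀ n : ℕ, MockThetaAux.D q 0 n = qPoch (-q) q n := fun n => by
    unfold MockThetaAux.D
    norm_num
  have hb : (∑' n : ℕ, (-1) ^ n * q ^ n / qPoch (-q) q n) = MockThetaAux.psi q 0 := by
    unfold MockThetaAux.psi
    refine tsum_congr fun n => ?_
    rw [hD0 n, show (0:ℕ)+1 = 1 from rfl, pow_one, neg_pow q]
  have ha : (∑' n : ℕ, q ^ (n ^ 2) / (qPoch (-q) q n) ^ 2)
      = ∑' n : ℕ, q ^ (n ^ 2) / (MockThetaAux.D q 0 n) ^ 2 := by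
    refine tsum_congr fun n => ?_
    rw [hD0 n]
  have h2 := MockThetaAux.sum_two hq
  have h3 := MockThetaAux.psi0_eq_rf hq
  rw [ha, hb]
  linear_combination h2 + h3
end

section
/- The function \alpha \mapsto \int_{-\infty}^{\infty} \frac{e^{-\alpha x^2}}{\cosh(\alpha x)} \, dx is well defined (the integral converges absolutely) and holomorphic on the right half-plane \{\alpha \in \mathbb{C} : \operatorname{Re} \alpha > 0\}. -/
open MeasureTheory Complex

namespace MordellAux

lemma norm_cosh_sq (z : ℂ) :
    ‖Complex.cosh z‖ ^ 2 = Real.sinh z.re ^ 2 + Real.cos z.im ^ 2 := by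
  have h : Complex.cosh z
      = (↑(Real.cosh z.re * Real.cos z.im) : ℂ)
        + (↑(Real.sinh z.re * Real.sin z.im) : ℂ) * Complex.I := by
    conv_lhs => rw [← Complex.re_add_im z]
    rw [Complex.cosh_add, Complex.cosh_mul_I, Complex.sinh_mul_I,
      ← Complex.ofReal_cosh, ← Complex.ofReal_sinh, ← Complex.ofReal_cos,
      ← Complex.ofReal_sin]
    push_cast
    ring
  rw [h, Complex.sq_norm, Complex.normSq_add_mul_I]
  nlinarith [Real.sin_sq_add_cos_sq z.im, Real.cosh_sq z.re]

lemma abs_sinh_re_le (z : ℂ) : |Real.sinh z.re| ≤ ‖Complex.cosh z‖ := by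
  nlinarith [norm_cosh_sq z, norm_nonneg (Complex.cosh z), abs_nonneg (Real.sinh z.re),
    _root_.sq_abs (Real.sinh z.re), sq_nonneg (Real.cos z.im)]

lemma abs_cos_im_le (z : ℂ) : |Real.cos z.im| ≤ ‖Complex.cosh z‖ := by
  nlinarith [norm_cosh_sq z, norm_nonneg (Complex.cosh z), abs_nonneg (Real.cos z.im),
    _root_.sq_abs (Real.cos z.im), sq_nonneg (Real.sinh z.re)]

lemma norm_exp_le (z : ℂ) : ‖Complex.exp z‖ ≤ Real.exp ‖z‖ := by
  rw [Complex.norm_exp]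
  exact Real.exp_le_exp.2 ((le_abs_self z.re).trans (Complex.abs_re_le_norm z))

lemma norm_cosh_le (z : ℂ) : ‖Complex.cosh z‖ ≤ Real.exp ‖z‖ := by
  have h1 := norm_exp_le z
  have h2 := norm_exp_le (-z)
  rw [norm_neg] at h2
  calc ‖Complex.cosh z‖ = ‖(Complex.exp z + Complex.exp (-z)) / 2‖ := rfl
    _ ≤ (‖Complex.exp z‖ + ‖Complex.exp (-z)‖) / 2 := by
        rw [norm_div, show ‖(2:ℂ)‖ = 2 by norm_num]
        gcongr
        exact norm_add_le _ _
    _ ≤ Real.exp ‖z‖ := by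
        rw [div_le_iff₀ (by norm_num : (0:ℝ) < 2)]
        linarith

lemma norm_sinh_le (z : ℂ) : ‖Complex.sinh z‖ ≤ Real.exp ‖z‖ := by
  have h1 := norm_exp_le z
  have h2 := norm_exp_le (-z)
  rw [norm_neg] at h2
  calc ‖Complex.sinh z‖ = ‖(Complex.exp z - Complex.exp (-z)) / 2‖ := rfl
    _ ≤ (‖Complex.exp z‖ + ‖Complex.exp (-z)‖) / 2 := by
        rw [norm_div, show ‖(2:ℂ)‖ = 2 by norm_num]
        gcongr
        exact norm_sub_le _ _
    _ ≤ Real.exp ‖z‖ := by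
        rw [div_le_iff₀ (by norm_num : (0:ℝ) < 2)]
        linarith

/-- Uniform lower bound for `‖cosh (α x)‖`. -/
lemma cosh_lower {r M : ℝ} (hr : 0 < r) (hM : 0 < M) {α : ℂ}
    (hre : r ≤ α.re) (him : |α.im| ≤ M) (x : ℝ) :
    min (Real.cos 1) (Real.sinh (r / M)) ≤ ‖Complex.cosh (α * x)‖ := by
  have hre' : (α * (x : ℂ)).re = α.re * x := by simp
  have him' : (α * (x : ℂ)).im = α.im * x := by simp
  rcases le_or_gt |x| (1 / M) with h | h
  · refine (min_le_left _ _).trans ?_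
    have h1 : |(α * (x : ℂ)).im| ≤ 1 := by
      rw [him', abs_mul]
      calc |α.im| * |x| ≤ M * (1 / M) := by
            exact mul_le_mul him h (abs_nonneg _) hM.le
        _ = 1 := by field_simp
    have hc : Real.cos 1 ≤ Real.cos |(α * (x : ℂ)).im| := by
      apply Real.cos_le_cos_of_nonneg_of_le_pi (abs_nonneg _)
      · linarith [Real.pi_gt_three]
      · exact h1
    rw [Real.cos_abs] at hc
    calc Real.cos 1 ≤ Real.cos ((α * (x : ℂ)).im) := hc
      _ ≤ |Real.cos ((α * (x : ℂ)).im)| := le_abs_self _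
      _ ≤ ‖Complex.cosh (α * x)‖ := abs_cos_im_le _
  · refine (min_le_right _ _).trans ?_
    have h1 : r / M ≤ |(α * (x : ℂ)).re| := by
      rw [hre', abs_mul, abs_of_pos (hr.trans_le hre)]
      calc r / M = r * (1 / M) := by ring
        _ ≤ α.re * |x| := mul_le_mul hre h.le (by positivity) (hr.trans_le hre).le
    calc Real.sinh (r / M) ≤ Real.sinh |(α * (x : ℂ)).re| := Real.sinh_le_sinh.2 h1
      _ = |Real.sinh ((α * (x : ℂ)).re)| := (Real.abs_sinh _).symm
      _ ≤ ‖Complex.cosh (α * x)‖ := abs_sinh_re_le _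

lemma cosh_pos_const {r M : ℝ} (hr : 0 < r) (hM : 0 < M) :
    0 < min (Real.cos 1) (Real.sinh (r / M)) := by
  apply lt_min
  · exact Real.cos_pos_of_mem_Ioo ⟨by linarith [Real.pi_gt_three], by linarith [Real.pi_gt_three]⟩
  · exact Real.sinh_pos_iff.2 (by positivity)

lemma mix_le {M r y : ℝ} (hr : 0 < r) : M * y - r / 2 * y ^ 2 ≤ M ^ 2 / (2 * r) := by
  rw [le_div_iff₀ (by positivity : (0:ℝ) < 2 * r)]
  nlinarith [sq_nonneg (M - r * y)]

lemma mix_le' {M r x : ℝ} (hr : 0 < r) :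
    M * |x| + -r * x ^ 2 ≤ M ^ 2 / (2 * r) + -(r / 2) * x ^ 2 := by
  have h : M * |x| - r / 2 * |x| ^ 2 ≤ M ^ 2 / (2 * r) := mix_le hr
  rw [_root_.sq_abs] at h
  linarith

lemma cosh_ne_zero {α : ℂ} (hα : 0 < α.re) (x : ℝ) : Complex.cosh (α * x) ≠ 0 := by
  set M := |α.im| + 1 with hM
  have h := cosh_lower hα (by positivity : (0:ℝ) < M) le_rfl
    (by simp [hM] : |α.im| ≤ M) x
  have hpos := cosh_pos_const hα (by positivity : (0:ℝ) < M)
  intro hz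
  rw [hz, norm_zero] at h
  linarith

lemma norm_cexp_le {α : ℂ} {r : ℝ} (hr : r ≤ α.re) (x : ℝ) :
    ‖Complex.exp (-α * (x : ℂ) ^ 2)‖ ≤ Real.exp (-r * x ^ 2) := by
  rw [Complex.norm_exp]
  apply Real.exp_le_exp.2
  have hre2 : ((x : ℂ) ^ 2).re = x ^ 2 := by
    rw [← Complex.ofReal_pow]; exact Complex.ofReal_re _
  have him2 : ((x : ℂ) ^ 2).im = 0 := by
    rw [← Complex.ofReal_pow]; exact Complex.ofReal_im _
  have h2 : (-α * (x : ℂ) ^ 2).re = -α.re * x ^ 2 := by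
    rw [Complex.mul_re, Complex.neg_re, Complex.neg_im, hre2, him2]
    ring
  rw [h2]
  nlinarith [sq_nonneg x]

/-- Integrability of the integrand. -/
lemma key_integrable {α : ℂ} (hα : 0 < α.re) :
    MeasureTheory.Integrable
      (fun x : ℝ => Complex.exp (-α * (x : ℂ) ^ 2) / Complex.cosh (α * x)) := by
  set M := |α.im| + 1 with hMdef
  have hM : (0:ℝ) < M := by positivity
  set c := min (Real.cos 1) (Real.sinh (α.re / M)) with hcdef
  have hc : 0 < c := cosh_pos_const hα hM
  have hlow : ∀ x : ℝ, c ≤ ‖Complex.cosh (α * x)‖ := fun x =>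
    cosh_lower hα hM le_rfl (by simp [hMdef]) x
  have hcont : Continuous (fun x : ℝ => Complex.exp (-α * (x : ℂ) ^ 2) / Complex.cosh (α * x)) := by
    apply Continuous.div
    · fun_prop
    · fun_prop
    · exact fun x => cosh_ne_zero hα x
  apply MeasureTheory.Integrable.mono'
    ((integrable_exp_neg_mul_sq hα).const_mul c⁻¹) hcont.aestronglyMeasurable
  filter_upwards with x
  rw [norm_div]
  calc ‖Complex.exp (-α * (x : ℂ) ^ 2)‖ / ‖Complex.cosh (α * x)‖
      ≤ Real.exp (-α.re * x ^ 2) / c := by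
        apply div_le_div₀ (Real.exp_nonneg _) (norm_cexp_le le_rfl x) hc (hlow x)
    _ = c⁻¹ * Real.exp (-α.re * x ^ 2) := by ring

end MordellAux

open MordellAux in
theorem mordell_integral_holomorphic :
    (∀ α : ℂ, 0 < α.re →
        MeasureTheory.Integrable
          (fun x : ℝ => Complex.exp (-α * (x : ℂ) ^ 2) / Complex.cosh (α * x))) ∧
      DifferentiableOn ℂ
        (fun α : ℂ => ∫ x : ℝ, Complex.exp (-α * (x : ℂ) ^ 2) / Complex.cosh (α * x))
        {α : ℂ | 0 < α.re} := by
  refine ⟨fun α hα => key_integrable hα, ?_⟩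
  intro α₀ hα₀
  simp only [Set.mem_setOf_eq] at hα₀
  have hopen : IsOpen {α : ℂ | 0 < α.re} := isOpen_lt continuous_const Complex.continuous_re
  apply DifferentiableAt.differentiableWithinAt
  -- setup
  set r : ℝ := α₀.re / 2 with hrdef
  have hr : 0 < r := by positivity
  set M : ℝ := ‖α₀‖ + r with hMdef
  have hM : 0 < M := by positivity
  set c : ℝ := min (Real.cos 1) (Real.sinh (r / M)) with hcdef
  have hc : 0 < c := cosh_pos_const hr hM
  -- facts about the ball
  have hball : ∀ α ∈ Metric.ball α₀ r, r ≤ α.re ∧ |α.im| ≤ M := by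
    intro α hα
    rw [Metric.mem_ball, Complex.dist_eq] at hα
    constructor
    · have := Complex.abs_re_le_norm (α - α₀)
      have h2 : |α.re - α₀.re| ≤ ‖α - α₀‖ := by
        simpa using this
      rw [abs_le] at h2
      have := h2.1
      simp only [hrdef] at *
      linarith
    · have := Complex.abs_im_le_norm α
      have h3 : ‖α‖ ≤ ‖α₀‖ + ‖α - α₀‖ := by
        calc ‖α‖ = ‖α₀ + (α - α₀)‖ := by ring_nf
          _ ≤ ‖α₀‖ + ‖α - α₀‖ := norm_add_le _ _
      calc |α.im| ≤ ‖α‖ := Complex.abs_im_le_norm α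
        _ ≤ ‖α₀‖ + ‖α - α₀‖ := h3
        _ ≤ ‖α₀‖ + r := by linarith
        _ = M := rfl
  have hballM : ∀ α ∈ Metric.ball α₀ r, ‖α‖ ≤ M := by
    intro α hα
    rw [Metric.mem_ball, Complex.dist_eq] at hα
    calc ‖α‖ = ‖α₀ + (α - α₀)‖ := by ring_nf
      _ ≤ ‖α₀‖ + ‖α - α₀‖ := norm_add_le _ _
      _ ≤ M := by simp only [hMdef]; linarith
  -- derivative candidate
  set F' : ℂ → ℝ → ℂ := fun α x =>
    (Complex.exp (-α * (x : ℂ) ^ 2) * (-(x : ℂ) ^ 2) * Complex.cosh (α * x)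
      - Complex.exp (-α * (x : ℂ) ^ 2) * (Complex.sinh (α * x) * (x : ℂ)))
      / Complex.cosh (α * x) ^ 2 with hF'def
  -- the bound
  set bound : ℝ → ℝ := fun x =>
    (Real.exp (M ^ 2 / (2 * r)) / c ^ 2) * ((x ^ 2 + |x|) * Real.exp (-(r / 2) * x ^ 2))
    with hbdef
  have key := hasDerivAt_integral_of_dominated_loc_of_deriv_le
    (F := fun α (x : ℝ) => Complex.exp (-α * (x : ℂ) ^ 2) / Complex.cosh (α * x))
    (F' := F') (x₀ := α₀) (bound := bound) (μ := volume) (s := Metric.ball α₀ r) (Metric.ball_mem_nhds α₀ hr) ?_ (key_integrable hα₀) ?_ ?_ ?_ ?_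
  · exact key.2.differentiableAt
  · -- eventual measurability
    filter_upwards [hopen.mem_nhds hα₀] with α hα
    exact (key_integrable hα).aestronglyMeasurable
  · -- measurability of F' α₀
    apply Continuous.aestronglyMeasurable
    apply Continuous.div
    · fun_prop
    · fun_prop
    · exact fun x => pow_ne_zero _ (cosh_ne_zero hα₀ x)
  · -- bound
    filter_upwards with x
    intro α hα
    obtain ⟨hαr, hαim⟩ := hball α hα
    have hαM := hballM α hα
    have hαpos : 0 < α.re := hr.trans_le hαr
    have hlow : c ≤ ‖Complex.cosh (α * x)‖ := cosh_lower hr hM hαr hαim x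
    have hnz : ‖α * (x : ℂ)‖ ≤ M * |x| := by
      rw [norm_mul, Complex.norm_real, Real.norm_eq_abs]
      exact mul_le_mul_of_nonneg_right hαM (abs_nonneg _)
    have hcosh_ub : ‖Complex.cosh (α * x)‖ ≤ Real.exp (M * |x|) :=
      (norm_cosh_le _).trans (Real.exp_le_exp.2 hnz)
    have hsinh_ub : ‖Complex.sinh (α * x)‖ ≤ Real.exp (M * |x|) :=
      (norm_sinh_le _).trans (Real.exp_le_exp.2 hnz)
    have hexp_ub : ‖Complex.exp (-α * (x : ℂ) ^ 2)‖ ≤ Real.exp (-r * x ^ 2) :=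
      norm_cexp_le hαr x
    have hnum : ‖Complex.exp (-α * (x : ℂ) ^ 2) * (-(x : ℂ) ^ 2) * Complex.cosh (α * x)
        - Complex.exp (-α * (x : ℂ) ^ 2) * (Complex.sinh (α * x) * (x : ℂ))‖
        ≤ (x ^ 2 + |x|) * Real.exp (M * |x|) * Real.exp (-r * x ^ 2) := by
      calc ‖Complex.exp (-α * (x : ℂ) ^ 2) * (-(x : ℂ) ^ 2) * Complex.cosh (α * x)
            - Complex.exp (-α * (x : ℂ) ^ 2) * (Complex.sinh (α * x) * (x : ℂ))‖
          ≤ ‖Complex.exp (-α * (x : ℂ) ^ 2) * (-(x : ℂ) ^ 2) * Complex.cosh (α * x)‖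
            + ‖Complex.exp (-α * (x : ℂ) ^ 2) * (Complex.sinh (α * x) * (x : ℂ))‖ :=
            norm_sub_le _ _
        _ = ‖Complex.exp (-α * (x : ℂ) ^ 2)‖ * x ^ 2 * ‖Complex.cosh (α * x)‖
            + ‖Complex.exp (-α * (x : ℂ) ^ 2)‖ * (‖Complex.sinh (α * x)‖ * |x|) := by
            rw [norm_mul, norm_mul, norm_mul, norm_mul, norm_neg, norm_pow]
            simp [Complex.norm_real, _root_.sq_abs]
        _ ≤ Real.exp (-r * x ^ 2) * x ^ 2 * Real.exp (M * |x|)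
            + Real.exp (-r * x ^ 2) * (Real.exp (M * |x|) * |x|) := by
            gcongr
        _ = (x ^ 2 + |x|) * Real.exp (M * |x|) * Real.exp (-r * x ^ 2) := by ring
    have hmix : Real.exp (M * |x|) * Real.exp (-r * x ^ 2)
        ≤ Real.exp (M ^ 2 / (2 * r)) * Real.exp (-(r / 2) * x ^ 2) := by
      rw [← Real.exp_add, ← Real.exp_add]
      exact Real.exp_le_exp.2 (mix_le' hr)
    rw [hF'def]
    simp only
    rw [norm_div, norm_pow]
    calc ‖Complex.exp (-α * (x : ℂ) ^ 2) * (-(x : ℂ) ^ 2) * Complex.cosh (α * x)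
          - Complex.exp (-α * (x : ℂ) ^ 2) * (Complex.sinh (α * x) * (x : ℂ))‖
          / ‖Complex.cosh (α * x)‖ ^ 2
        ≤ ((x ^ 2 + |x|) * Real.exp (M * |x|) * Real.exp (-r * x ^ 2)) / c ^ 2 := by
          apply div_le_div₀ (by positivity) hnum (by positivity)
          exact pow_le_pow_left₀ hc.le hlow 2
      _ ≤ ((x ^ 2 + |x|) * (Real.exp (M ^ 2 / (2 * r)) * Real.exp (-(r / 2) * x ^ 2))) / c ^ 2 := by
          apply (div_le_div_iff_of_pos_right (by positivity : (0:ℝ) < c ^ 2)).2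
          rw [mul_assoc]
          exact mul_le_mul_of_nonneg_left hmix (by positivity)
      _ = bound x := by rw [hbdef]; ring
  · -- integrability of bound
    have h2 : MeasureTheory.Integrable (fun x : ℝ => x ^ 2 * Real.exp (-(r / 2) * x ^ 2)) := by
      have h := integrable_rpow_mul_exp_neg_mul_sq (b := r / 2) (by positivity)
        (s := 2) (by norm_num)
      refine h.congr (Filter.Eventually.of_forall fun x => ?_)
      norm_num [show ((2:ℝ)) = ((2:ℕ):ℝ) by norm_num, Real.rpow_natCast]
    have h1 : MeasureTheory.Integrable (fun x : ℝ => |x| * Real.exp (-(r / 2) * x ^ 2)) := by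
      have h := integrable_rpow_mul_exp_neg_mul_sq (b := r / 2) (by positivity)
        (s := 1) (by norm_num)
      have h' : MeasureTheory.Integrable (fun x : ℝ => x * Real.exp (-(r / 2) * x ^ 2)) := by
        refine h.congr (Filter.Eventually.of_forall fun x => ?_)
        norm_num [Real.rpow_one]
      refine h'.abs.congr (Filter.Eventually.of_forall fun x => ?_)
      simp [abs_mul, abs_of_pos (Real.exp_pos _)]
    have hsum := (h2.add h1).const_mul (Real.exp (M ^ 2 / (2 * r)) / c ^ 2)
    apply hsum.congr
    filter_upwards with x
    simp only [hbdef, Pi.add_apply]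
    ring
  · -- differentiability
    filter_upwards with x
    intro α hα
    have hαpos : 0 < α.re := hr.trans_le (hball α hα).1
    have hu : HasDerivAt (fun a : ℂ => Complex.exp (-a * (x : ℂ) ^ 2))
        (Complex.exp (-α * (x : ℂ) ^ 2) * (-(x : ℂ) ^ 2)) α := by
      have hlin : HasDerivAt (fun a : ℂ => -a * (x : ℂ) ^ 2) (-(x : ℂ) ^ 2) α := by
        simpa using ((hasDerivAt_id α).neg.mul_const ((x : ℂ) ^ 2))
      exact hlin.cexp
    have hv : HasDerivAt (fun a : ℂ => Complex.cosh (a * x))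
        (Complex.sinh (α * x) * (x : ℂ)) α := by
      have hlin : HasDerivAt (fun a : ℂ => a * (x : ℂ)) ((x : ℂ)) α :=
        hasDerivAt_mul_const _
      exact hlin.ccosh
    have := hu.div hv (cosh_ne_zero hαpos x)
    simpa [hF'def, Pi.div_def] using this
end
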